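/- (Sub-Gaussianity of Bernoulli random variables, Kearns–Saul inequality.) For every μ ∈ (0,1) with μ ≠ 1/2 and every λ ∈ ℝ, μ·exp(λ·(1−μ)) + (1−μ)·exp(−λ·μ) ≤ exp((λ²/2)·g(μ)), where g(μ) := (1/2 − μ)/log(1/μ − 1). Equivalently, if X is a Bernoulli random variable with mean μ, then log E[exp(λ·(X − μ))] ≤ (λ²/2)·g(μ) for all λ ∈ ℝ. -/

import Mathlib

lemma elem1 (x : ℝ) (hx : 1 < x) : 2*(x-1)/(x+1) < Real.log x := by
  have h0 : (0:ℝ) < x := by linarith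
  set f : ℝ → ℝ := fun y => Real.log y + 4*(y+1)⁻¹ - 2 with hf
  have hder : ∀ y : ℝ, 1 ≤ y → HasDerivAt f (1/y - 4/(y+1)^2) y := by
    intro y hy
    have h1 : HasDerivAt (fun y : ℝ => y + 1) 1 y := (hasDerivAt_id y).add_const 1
    have h2 : HasDerivAt (fun y : ℝ => (y+1)⁻¹) (-1/(y+1)^2) y := h1.inv (by linarith)
    have h3 := (Real.hasDerivAt_log (by linarith : y ≠ 0)).add (h2.const_mul 4)
    have h4 := h3.sub_const 2
    refine h4.congr_deriv ?_
    field_simp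
    ring
  have hmono : StrictMonoOn f (Set.Ici 1) := by
    apply strictMonoOn_of_deriv_pos (convex_Ici 1)
    · intro y hy
      exact (hder y hy).continuousAt.continuousWithinAt
    · intro y hy
      rw [interior_Ici] at hy
      rw [(hder y (le_of_lt hy)).deriv]
      have hy1 : (1:ℝ) < y := hy
      rw [sub_pos, div_lt_div_iff₀ (by positivity) (by linarith)]
      nlinarith
  have := hmono (Set.self_mem_Ici) (Set.mem_Ici.2 hx.le) hx
  have hf1 : f 1 = 0 := by simp [hf]; norm_num
  rw [hf1] at this
  have : 2 - 4*(x+1)⁻¹ < Real.log x := by simp [hf] at this; linarith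
  have heq : 2*(x-1)/(x+1) = 2 - 4*(x+1)⁻¹ := by
    field_simp
    ring
  linarith [heq ▸ this]

lemma elem2 (x : ℝ) (hx : 1 < x) : Real.log x < (x - 1/x)/2 := by
  have h0 : (0:ℝ) < x := by linarith
  set f : ℝ → ℝ := fun y => (y - 1/y)/2 - Real.log y with hf
  have hder : ∀ y : ℝ, 1 ≤ y → HasDerivAt f ((1 + 1/y^2)/2 - 1/y) y := by
    intro y hy
    have h2 : HasDerivAt (fun y : ℝ => y⁻¹) (-1/y^2) y := by exact (hasDerivAt_id y).inv (show id y ≠ 0 by simp; linarith)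
    have h3 : HasDerivAt (fun y : ℝ => (y - 1/y)/2) ((1 - -1/y^2)/2) y := by
      simpa [one_div] using ((hasDerivAt_id y).sub h2).div_const 2
    have h4 := h3.sub (Real.hasDerivAt_log (by linarith : y ≠ 0))
    refine h4.congr_deriv ?_
    field_simp
    ring
  have hmono : StrictMonoOn f (Set.Ici 1) := by
    apply strictMonoOn_of_deriv_pos (convex_Ici 1)
    · intro y hy
      exact (hder y hy).continuousAt.continuousWithinAt
    · intro y hy
      rw [interior_Ici] at hy
      rw [(hder y (le_of_lt hy)).deriv]
      have hy1 : (1:ℝ) < y := hy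
      have : (1 + 1/y^2)/2 - 1/y = (y-1)^2/(2*y^2) := by
        field_simp
        ring
      rw [this]
      have h1 : 0 < (y-1)^2 := by nlinarith
      exact div_pos h1 (by positivity)
  have := hmono (Set.self_mem_Ici) (Set.mem_Ici.2 hx.le) hx
  have hf1 : f 1 = 0 := by simp [hf]
  rw [hf1] at this
  simp only [hf] at this
  linarith


noncomputable def KD (μ l : ℝ) : ℝ := 1 - μ + μ * Real.exp l
noncomputable def Kq (μ l : ℝ) : ℝ := μ * Real.exp l / KD μ l
noncomputable def KG (μ g l : ℝ) : ℝ := g*l^2/2 + μ*l - Real.log (KD μ l)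
noncomputable def KG' (μ g l : ℝ) : ℝ := g*l + μ - Kq μ l

lemma KD_pos {μ : ℝ} (h0 : 0 < μ) (h1 : μ < 1) (l : ℝ) : 0 < KD μ l := by
  have := Real.exp_pos l
  unfold KD
  nlinarith

lemma KD_hasDeriv (μ l : ℝ) : HasDerivAt (KD μ) (μ * Real.exp l) l := by
  unfold KD
  simpa using ((Real.hasDerivAt_exp l).const_mul μ).const_add (1-μ)

lemma Kq_pos {μ : ℝ} (h0 : 0 < μ) (h1 : μ < 1) (l : ℝ) : 0 < Kq μ l :=
  div_pos (by positivity) (KD_pos h0 h1 l)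

lemma KG_hasDeriv {μ : ℝ} (h0 : 0 < μ) (h1 : μ < 1) (g l : ℝ) :
    HasDerivAt (KG μ g) (KG' μ g l) l := by
  have h1' : HasDerivAt (fun l => Real.log (KD μ l)) (μ * Real.exp l / KD μ l) l :=
    (KD_hasDeriv μ l).log (KD_pos h0 h1 l).ne'
  have h2 : HasDerivAt (fun l : ℝ => g*l^2/2 + μ*l) (g*l + μ) l := by
    have := (((hasDerivAt_pow 2 l).const_mul g).div_const 2).add ((hasDerivAt_id l).const_mul μ)
    refine this.congr_deriv ?_
    simp
    ring
  unfold KG KG' Kq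
  exact h2.sub h1'

lemma KG'_hasDeriv {μ : ℝ} (h0 : 0 < μ) (h1 : μ < 1) (g l : ℝ) :
    HasDerivAt (KG' μ g) (g - Kq μ l * (1 - Kq μ l)) l := by
  have hD := KD_pos h0 h1 l
  have hE := Real.exp_pos l
  have hnum : HasDerivAt (fun l => μ * Real.exp l) (μ * Real.exp l) l :=
    (Real.hasDerivAt_exp l).const_mul μ
  have hq : HasDerivAt (Kq μ)
      ((μ*Real.exp l * KD μ l - μ*Real.exp l * (μ*Real.exp l))/(KD μ l)^2) l := by
    unfold Kq
    exact hnum.div (KD_hasDeriv μ l) hD.ne'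
  have h2 : HasDerivAt (fun l : ℝ => g*l + μ) g l := by
    simpa using ((hasDerivAt_id l).const_mul g).add_const μ
  have h3 := h2.sub hq
  refine h3.congr_deriv ?_
  unfold Kq KD
  unfold KD at hD
  field_simp

set_option maxHeartbeats 1600000 in
lemma ksg_core (μ L g p : ℝ) (h0 : 0 < μ) (h2 : μ < 1/2) (hL : 0 < L)
    (hexpL : Real.exp L = (1-μ)/μ) (hgL : g * L = 1/2 - μ)
    (hpμ : μ < p) (hp2 : p < 1/2) (hpg : p * (1-p) = g)
    (lam : ℝ) (hlam : lam ≤ L) : 0 ≤ KG μ g lam := by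
  have hμ1 : μ < 1 := by linarith
  have hp0 : 0 < p := by linarith
  have hg0 : 0 < g := by nlinarith
  -- q value facts
  have hqhalf : ∀ l, l < L → Kq μ l < 1/2 := by
    intro l hl
    have he : Real.exp l < (1-μ)/μ := by
      rw [← hexpL]; exact Real.exp_lt_exp.2 hl
    rw [lt_div_iff₀ h0] at he
    have hE := Real.exp_pos l
    have hD := KD_pos h0 hμ1 l
    unfold Kq at *
    rw [div_lt_iff₀ hD]
    unfold KD at *
    nlinarith
  have hqL : Kq μ L = 1/2 := by
    unfold Kq KD
    rw [hexpL]
    have h1 : μ * ((1-μ)/μ) = 1-μ := by field_simp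
    rw [h1, div_eq_iff (by nlinarith)]
    ring
  set lam1 : ℝ := Real.log (p*(1-μ)/((1-p)*μ)) with hlam1def
  have harg : 0 < p*(1-μ)/((1-p)*μ) := by
    apply div_pos <;> nlinarith
  have hexplam1 : Real.exp lam1 = p*(1-μ)/((1-p)*μ) := Real.exp_log harg
  have hlam1pos : 0 < lam1 := Real.log_pos (by rw [lt_div_iff₀ (by nlinarith)]; nlinarith)
  have hlam1L : lam1 < L := by
    have := Real.log_lt_log harg (show p*(1-μ)/((1-p)*μ) < (1-μ)/μ by
      rw [div_lt_div_iff₀ (by nlinarith) h0]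
      nlinarith [mul_pos (mul_pos h0 (show (0:ℝ)<1-μ by linarith)) (show (0:ℝ)<1-2*p by linarith)])
    calc lam1 = Real.log (p*(1-μ)/((1-p)*μ)) := hlam1def
    _ < Real.log ((1-μ)/μ) := this
    _ = L := by rw [← hexpL, Real.log_exp]
  clear_value lam1
  have hclt : ∀ l, l < lam1 → Kq μ l < p := by
    intro l hl
    have he : Real.exp l < p*(1-μ)/((1-p)*μ) := by
      rw [← hexplam1]; exact Real.exp_lt_exp.2 hl
    rw [lt_div_iff₀ (by nlinarith)] at he
    have hE := Real.exp_pos l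
    have hD := KD_pos h0 hμ1 l
    unfold Kq
    rw [div_lt_iff₀ hD]
    unfold KD at *
    nlinarith
  have hcgt : ∀ l, lam1 < l → p < Kq μ l := by
    intro l hl
    have he : p*(1-μ)/((1-p)*μ) < Real.exp l := by
      rw [← hexplam1]; exact Real.exp_lt_exp.2 hl
    rw [div_lt_iff₀ (by nlinarith)] at he
    have hE := Real.exp_pos l
    have hD := KD_pos h0 hμ1 l
    unfold Kq
    rw [lt_div_iff₀ hD]
    unfold KD at *
    nlinarith
  -- values of KG'
  have hG'0 : KG' μ g 0 = 0 := by
    unfold KG' Kq KD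
    simp
  have hG'L : KG' μ g L = 0 := by
    unfold KG'
    rw [hqL]
    linarith
  have hG0 : KG μ g 0 = 0 := by
    unfold KG KD
    simp
  -- monotonicity of KG'
  have mono1 : StrictMonoOn (KG' μ g) (Set.Iic lam1) := by
    apply strictMonoOn_of_deriv_pos (convex_Iic lam1)
    · intro y _
      exact (KG'_hasDeriv h0 hμ1 g y).continuousAt.continuousWithinAt
    · intro y hy
      rw [interior_Iic] at hy
      rw [(KG'_hasDeriv h0 hμ1 g y).deriv]
      have h1 := hclt y hy
      have h2 := Kq_pos h0 hμ1 y
      have key : 0 < (p - Kq μ y) * (1 - p - Kq μ y) :=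
        mul_pos (by linarith) (by linarith)
      nlinarith [key]
  have anti1 : StrictAntiOn (KG' μ g) (Set.Icc lam1 L) := by
    apply strictAntiOn_of_deriv_neg (convex_Icc lam1 L)
    · intro y _
      exact (KG'_hasDeriv h0 hμ1 g y).continuousAt.continuousWithinAt
    · intro y hy
      rw [interior_Icc] at hy
      rw [(KG'_hasDeriv h0 hμ1 g y).deriv]
      have h1 := hcgt y hy.1
      have h2 := hqhalf y hy.2
      have key : 0 < (Kq μ y - p) * (1 - p - Kq μ y) :=
        mul_pos (by linarith) (by linarith)
      nlinarith [key]
  -- sign of KG'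
  have hG'nonpos : ∀ l ∈ Set.Iic (0:ℝ), KG' μ g l ≤ 0 := by
    intro l hl
    rcases eq_or_lt_of_le (Set.mem_Iic.1 hl) with h | h
    · rw [h, hG'0]
    · have := mono1 (Set.mem_Iic.2 (by linarith : l ≤ lam1))
        (Set.mem_Iic.2 hlam1pos.le) h
      rw [hG'0] at this
      linarith
  have hG'nonneg : ∀ l ∈ Set.Icc (0:ℝ) L, 0 ≤ KG' μ g l := by
    intro l hl
    rcases le_or_gt l lam1 with h | h
    · have := mono1.monotoneOn (Set.mem_Iic.2 hlam1pos.le) (Set.mem_Iic.2 h) hl.1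
      rw [hG'0] at this
      linarith
    · have := anti1.antitoneOn (Set.mem_Icc.2 ⟨h.le, hl.2⟩)
        (Set.mem_Icc.2 ⟨hlam1L.le, le_refl L⟩) hl.2
      rw [hG'L] at this
      linarith
  -- monotonicity of KG
  have hGanti : AntitoneOn (KG μ g) (Set.Iic 0) := by
    apply antitoneOn_of_deriv_nonpos (convex_Iic 0)
    · intro y _
      exact (KG_hasDeriv h0 hμ1 g y).continuousAt.continuousWithinAt
    · intro y hy
      exact (KG_hasDeriv h0 hμ1 g y).differentiableAt.differentiableWithinAt
    · intro y hy
      rw [interior_Iic] at hy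
      rw [(KG_hasDeriv h0 hμ1 g y).deriv]
      exact hG'nonpos y (Set.mem_Iic.2 hy.le)
  have hGmono : MonotoneOn (KG μ g) (Set.Icc 0 L) := by
    apply monotoneOn_of_deriv_nonneg (convex_Icc 0 L)
    · intro y _
      exact (KG_hasDeriv h0 hμ1 g y).continuousAt.continuousWithinAt
    · intro y hy
      exact (KG_hasDeriv h0 hμ1 g y).differentiableAt.differentiableWithinAt
    · intro y hy
      rw [interior_Icc] at hy
      rw [(KG_hasDeriv h0 hμ1 g y).deriv]
      exact hG'nonneg y (Set.mem_Icc.2 ⟨hy.1.le, hy.2.le⟩)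
  -- conclusion
  rcases le_or_gt lam 0 with h | h
  · have := hGanti (Set.mem_Iic.2 h) (Set.mem_Iic.2 (le_refl 0)) h
    rw [hG0] at this
    linarith
  · have := hGmono (Set.mem_Icc.2 ⟨le_refl 0, hL.le⟩) (Set.mem_Icc.2 ⟨h.le, hlam⟩) h.le
    rw [hG0] at this
    linarith

lemma ksg_left (μ : ℝ) (h0 : 0 < μ) (h2 : μ < 1/2) (lam : ℝ)
    (hlam : lam ≤ Real.log ((1-μ)/μ)) :
    0 ≤ KG μ ((1/2-μ)/Real.log ((1-μ)/μ)) lam := by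
  have hμ1 : μ < 1 := by linarith
  have hx : 1 < (1-μ)/μ := (one_lt_div h0).2 (by linarith)
  set L : ℝ := Real.log ((1-μ)/μ) with hLdef
  have hL : 0 < L := Real.log_pos hx
  set g : ℝ := (1/2 - μ)/L with hgdef
  have hg0 : 0 < g := div_pos (by linarith) hL
  have hgL : g * L = 1/2 - μ := div_mul_cancel₀ _ hL.ne'
  have hexpL : Real.exp L = (1-μ)/μ := Real.exp_log (by positivity)
  have hg14 : g < 1/4 := by
    have h := elem1 _ hx
    have he : 2*((1-μ)/μ-1)/((1-μ)/μ+1) = 4*(1/2-μ) := by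
      field_simp
      ring
    rw [he] at h
    rw [hgdef, div_lt_iff₀ hL]
    linarith
  have hgμ : μ*(1-μ) < g := by
    have h := elem2 _ hx
    have h1μ : (1:ℝ) - μ ≠ 0 := by linarith
    have he : ((1-μ)/μ - 1/((1-μ)/μ))/2 * (μ*(1-μ)) = 1/2 - μ := by
      rw [one_div_div]
      field_simp
      ring
    have h3 : L * (μ*(1-μ)) < 1/2 - μ := by
      rw [← he]
      exact mul_lt_mul_of_pos_right h (by nlinarith)
    rw [hgdef, lt_div_iff₀ hL]
    nlinarith
  clear_value L
  clear_value g
  set s : ℝ := Real.sqrt (1/4 - g) with hsdef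
  have hs2 : s^2 = 1/4 - g := Real.sq_sqrt (by linarith)
  have hs0 : 0 < s := Real.sqrt_pos.2 (by linarith)
  have hsμ : s < 1/2 - μ := by
    have h1 : Real.sqrt (1/4 - g) < Real.sqrt ((1/2-μ)^2) :=
      Real.sqrt_lt_sqrt (by linarith) (by nlinarith)
    rwa [Real.sqrt_sq (by linarith)] at h1
  clear_value s
  exact ksg_core μ L g (1/2 - s) h0 h2 hL hexpL hgL (by linarith) (by linarith)
    (by nlinarith) lam hlam

lemma ksg_reflect (μ L g lam : ℝ) (h0 : 0 < μ) (hμ1 : μ < 1)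
    (hexpL : Real.exp L = (1-μ)/μ) (hgL : g * L = 1/2 - μ) :
    KG μ g (2*L - lam) = KG μ g lam := by
  have hE := Real.exp_pos lam
  have hD := KD_pos h0 hμ1 lam
  have h1μ : (0:ℝ) < 1 - μ := by linarith
  have hlogL : Real.log ((1-μ)/μ) = L := by rw [← hexpL, Real.log_exp]
  have hexp2 : Real.exp (2*L - lam) = ((1-μ)/μ)^2 * (Real.exp lam)⁻¹ := by
    rw [Real.exp_sub, two_mul, Real.exp_add, hexpL, div_eq_mul_inv]
    ring
  have hfac : 1 - μ + μ * (((1-μ)/μ)^2 * (Real.exp lam)⁻¹)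
      = (1-μ)/μ * (Real.exp lam)⁻¹ * (1-μ+μ*Real.exp lam) := by
    field_simp
    ring
  have hlog : Real.log (KD μ (2*L - lam)) = L - lam + Real.log (KD μ lam) := by
    unfold KD
    rw [hexp2, hfac]
    rw [Real.log_mul (by positivity) (by unfold KD at hD; linarith)]
    rw [Real.log_mul (by positivity) (by positivity)]
    rw [hlogL, Real.log_inv, Real.log_exp]
    ring
  unfold KG
  rw [hlog]
  linear_combination (2*L - 2*lam) * hgL

lemma ksg_all (μ : ℝ) (h0 : 0 < μ) (h2 : μ < 1/2) (lam : ℝ) :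
    0 ≤ KG μ ((1/2-μ)/Real.log ((1-μ)/μ)) lam := by
  have hμ1 : μ < 1 := by linarith
  have hx : 1 < (1-μ)/μ := (one_lt_div h0).2 (by linarith)
  have hL : 0 < Real.log ((1-μ)/μ) := Real.log_pos hx
  have hexpL : Real.exp (Real.log ((1-μ)/μ)) = (1-μ)/μ := Real.exp_log (by positivity)
  have hgL : (1/2-μ)/Real.log ((1-μ)/μ) * Real.log ((1-μ)/μ) = 1/2 - μ :=
    div_mul_cancel₀ _ hL.ne'
  rcases le_or_gt lam (Real.log ((1-μ)/μ)) with h | h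
  · exact ksg_left μ h0 h2 lam h
  · rw [← ksg_reflect μ (Real.log ((1-μ)/μ)) _ lam h0 hμ1 hexpL hgL]
    exact ksg_left μ h0 h2 _ (by linarith)

lemma ksg_flip (μ lam : ℝ) (h0 : 0 < μ) (h1 : μ < 1) :
    KG (1-μ) ((1/2 - (1-μ))/Real.log ((1-(1-μ))/(1-μ))) (-lam)
      = KG μ ((1/2-μ)/Real.log ((1-μ)/μ)) lam := by
  have h1μ : (0:ℝ) < 1 - μ := by linarith
  have hE := Real.exp_pos lam
  have hD := KD_pos h0 h1 lam
  have hμμ : (1:ℝ) - (1-μ) = μ := by ring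
  rw [hμμ]
  have hlogflip : Real.log (μ/(1-μ)) = -Real.log ((1-μ)/μ) := by
    rw [Real.log_div h0.ne' h1μ.ne', Real.log_div h1μ.ne' h0.ne']
    ring
  have hcoef : (1/2 - (1-μ))/Real.log (μ/(1-μ)) = (1/2-μ)/Real.log ((1-μ)/μ) := by
    rw [hlogflip, div_neg, ← neg_div]
    ring_nf
  have hinner : KD (1-μ) (-lam) = Real.exp (-lam) * KD μ lam := by
    unfold KD
    rw [hμμ, Real.exp_neg]
    unfold KD at hD
    field_simp
    ring
  have hlog : Real.log (KD (1-μ) (-lam)) = -lam + Real.log (KD μ lam) := by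
    rw [hinner, Real.log_mul (by positivity) (by unfold KD at hD ⊢; linarith),
      Real.log_exp]
  unfold KG
  rw [hcoef, hlog]
  ring

theorem kearns_saul (μ : ℝ) (hμ0 : 0 < μ) (hμ1 : μ < 1) (hμ : μ ≠ 1/2)
    (lam : ℝ) :
    μ * Real.exp (lam * (1 - μ)) + (1 - μ) * Real.exp (-lam * μ)
      ≤ Real.exp (lam ^ 2 / 2 * ((1/2 - μ) / Real.log (1/μ - 1))) := by
  have hD := KD_pos hμ0 hμ1 lam
  have hKG : 0 ≤ KG μ ((1/2-μ)/Real.log ((1-μ)/μ)) lam := by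
    rcases lt_or_gt_of_ne hμ with h | h
    · exact ksg_all μ hμ0 h lam
    · rw [← ksg_flip μ lam hμ0 hμ1]
      exact ksg_all (1-μ) (by linarith) (by linarith) (-lam)
  have harg : 1/μ - 1 = (1-μ)/μ := by field_simp
  rw [harg]
  have hlhs : μ * Real.exp (lam * (1 - μ)) + (1 - μ) * Real.exp (-lam * μ)
      = KD μ lam * Real.exp (-(μ*lam)) := by
    unfold KD
    rw [show lam * (1-μ) = lam + -(μ*lam) by ring, Real.exp_add,
      show -lam*μ = -(μ*lam) by ring]
    ring
  rw [hlhs, ← Real.exp_log hD, ← Real.exp_add, Real.exp_le_exp]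
  unfold KG at hKG
  nlinarith [hKG]
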